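/- The composite, in the homotopy-cospan category, of the comultiplication cospan ({*} → {*} ← {a,b}) with the multiplication cospan ({a,b} → {*} ← {*}) has apex homotopy equivalent to a circle; in particular it is not equal (up to homotopy) to the identity cospan. -/

import Mathlib

open unitInterval

/-- The double mapping cylinder (homotopy pushout) of the span `X ←f A →g Y`:
the quotient of `X ⊔ (A × [0,1]) ⊔ Y` identifying `(a,0)` with `f a` and `(a,1)` with `g a`. -/
def DMC {A X Y : Type*} [TopologicalSpace A] [TopologicalSpace X] [TopologicalSpace Y]
    (f : A → X) (g : A → Y) : Type _ :=
  Quot (fun p q : (X ⊕ A × I) ⊕ Y =>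
    (∃ a, p = Sum.inl (Sum.inr (a, 0)) ∧ q = Sum.inl (Sum.inl (f a))) ∨
    (∃ a, p = Sum.inl (Sum.inr (a, 1)) ∧ q = Sum.inr (g a)))

instance {A X Y : Type*} [TopologicalSpace A] [TopologicalSpace X] [TopologicalSpace Y]
    (f : A → X) (g : A → Y) : TopologicalSpace (DMC f g) :=
  instTopologicalSpaceQuot

/-- The canonical map `X → X ⊔ʰ_A Y`. -/
def DMC.inl {A X Y : Type*} [TopologicalSpace A] [TopologicalSpace X] [TopologicalSpace Y]
    {f : A → X} {g : A → Y} (x : X) : DMC f g :=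
  Quot.mk _ (Sum.inl (Sum.inl x))

/-- The canonical map `Y → X ⊔ʰ_A Y`. -/
def DMC.inr {A X Y : Type*} [TopologicalSpace A] [TopologicalSpace X] [TopologicalSpace Y]
    {f : A → X} {g : A → Y} (y : Y) : DMC f g :=
  Quot.mk _ (Sum.inr y)

/-- The wedge (bouquet) of circles indexed by `S`: glue the basepoint of each of `S` many
circles to one extra point. -/
def Bouquet (S : Type*) : Type _ :=
  Quot (fun p q : S × Circle ⊕ PUnit => ∃ s, p = Sum.inl (s, 1) ∧ q = Sum.inr PUnit.unit)

noncomputable instance (S : Type*) [TopologicalSpace S] : TopologicalSpace (Bouquet S) :=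
  instTopologicalSpaceQuot


namespace Stmt7Aux
open Real
open Real

lemma circle_mem_slitPlane {z : Circle} (h : (z:ℂ) ≠ -1) : (z:ℂ) ∈ Complex.slitPlane := by
  rw [Complex.mem_slitPlane_iff]
  by_contra hc
  push_neg at hc
  apply h
  have habs : ‖(z:ℂ)‖ = 1 := z.norm_coe
  have him : (z:ℂ).im = 0 := hc.2
  have hre : |(z:ℂ).re| = 1 := by
    rw [Complex.norm_def, Complex.normSq_apply, him, mul_zero, add_zero] at habs
    rw [← Real.sqrt_mul_self_eq_abs]; exact habs
  have : (z:ℂ).re = -1 := by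
    rcases abs_cases (z:ℂ).re with ⟨h1, _⟩ | ⟨h1, _⟩ <;> nlinarith [hc.1]
  exact Complex.ext (by simpa using this) (by simpa using him)

lemma ne_neg_one_of_dist_lt {z w : Circle} (h : dist z w < 2) : ((z / w : Circle) : ℂ) ≠ -1 := by
  intro hq
  rw [Circle.coe_div] at hq
  have hw : (w:ℂ) ≠ 0 := Circle.coe_ne_zero w
  have hz : (z:ℂ) = -(w:ℂ) := by field_simp at hq; linear_combination hq
  rw [show dist z w = dist (z:ℂ) (w:ℂ) from rfl, Complex.dist_eq, hz] at h
  have habs : ‖-(w:ℂ) - (w:ℂ)‖ = 2 := by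
    have h2 : (-(w:ℂ) - (w:ℂ)) = (-2) * w := by ring
    rw [h2, norm_mul, w.norm_coe]; simp
  rw [habs] at h; exact absurd h (lt_irrefl 2)

lemma dist_lt_two_slit {z w : Circle} (h : dist z w < 2) :
    ((z / w : Circle) : ℂ) ∈ Complex.slitPlane :=
  circle_mem_slitPlane (ne_neg_one_of_dist_lt h)

/-- A continuous map from `I` to the circle lifts through `Circle.exp`. -/
lemma exists_lift (γ : C(I, Circle)) : ∃ L : I → ℝ, Continuous L ∧ ∀ t, Circle.exp (L t) = γ t := by
  have huc : UniformContinuous γ := CompactSpace.uniformContinuous_of_continuous γ.continuous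
  obtain ⟨δ, hδ, hd⟩ := Metric.uniformContinuous_iff.mp huc 2 (by norm_num)
  obtain ⟨n, hn⟩ := exists_nat_one_div_lt hδ
  set N : ℕ := n + 1 with hN
  have hNpos : (0:ℝ) < N := by positivity
  have hmem : ∀ (k : ℕ) (t : I), min (t:ℝ) (k / N) ∈ I := by
    intro k t
    exact ⟨le_min t.2.1 (by positivity), le_trans (min_le_left _ _) t.2.2⟩
  set m : ℕ → I → I := fun k t => ⟨min (t:ℝ) (k / N), hmem k t⟩ with hm
  have hmc : ∀ k, Continuous fun t => m k t :=
    fun k => Continuous.subtype_mk (continuous_subtype_val.min continuous_const) _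
  have hdist : ∀ (k : ℕ) (t : I), dist (γ (m (k+1) t)) (γ (m k t)) < 2 := by
    intro k t
    apply hd
    have h1 : min (t:ℝ) (k / N) ≤ min (t:ℝ) ((k+1 : ℕ) / N) := by
      apply min_le_min le_rfl
      gcongr <;> push_cast <;> linarith
    have h2 : min (t:ℝ) ((k+1:ℕ) / N) - min (t:ℝ) (k / N) ≤ 1 / N := by
      rcases le_total (t:ℝ) ((k:ℝ) / N) with h | h
      · rw [min_eq_left h, min_eq_left (h.trans (by gcongr <;> push_cast <;> linarith))]
        simp
      · rw [min_eq_right h]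
        calc min (t:ℝ) ((k+1:ℕ)/N) - (k:ℝ)/N ≤ (k+1:ℕ)/N - (k:ℝ)/N :=
              sub_le_sub_right (min_le_right _ _) _
        _ = 1 / N := by push_cast; ring
    rw [Subtype.dist_eq, Real.dist_eq, abs_of_nonneg (by simp only [hm]; simpa using h1)]
    calc _ ≤ 1 / (N:ℝ) := by simpa [hm] using h2
    _ < δ := by rw [hN]; exact_mod_cast hn
  -- the lift
  set g : ℕ → I → ℝ := fun k t => Complex.arg ((γ (m (k+1) t) / γ (m k t) : Circle) : ℂ) with hg
  have hgc : ∀ k, Continuous (g k) := by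
    intro k
    rw [continuous_iff_continuousAt]
    intro t
    have hin : Continuous fun t : I => ((γ (m (k+1) t) / γ (m k t) : Circle) : ℂ) :=
      ((γ.continuous.comp (hmc (k+1))).div' (γ.continuous.comp (hmc k))).subtype_val
    have : ContinuousAt (Complex.arg ∘ fun t : I => ((γ (m (k+1) t) / γ (m k t) : Circle) : ℂ)) t :=
      ContinuousAt.comp (Complex.continuousAt_arg (dist_lt_two_slit (hdist k t))) hin.continuousAt
    exact this
  set L : I → ℝ := fun t => Complex.arg (γ (m 0 t) : ℂ) + ∑ k ∈ Finset.range N, g k t with hL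
  refine ⟨L, ?_, ?_⟩
  · apply Continuous.add
    · have h0 : (fun t : I => Complex.arg (γ (m 0 t) : ℂ))
          = fun _ : I => Complex.arg (γ ⟨0, by norm_num⟩ : ℂ) := by
        funext t
        have hzero : m 0 t = ⟨0, by norm_num⟩ := by
          apply Subtype.ext
          simp only [hm, Nat.cast_zero, zero_div]
          exact min_eq_right t.2.1
        rw [hzero]
      rw [h0]
      exact continuous_const
    · exact continuous_finset_sum _ fun k _ => hgc k
  · intro t
    have key : ∀ j : ℕ, j ≤ N →
        Circle.exp (Complex.arg (γ (m 0 t) : ℂ) + ∑ k ∈ Finset.range j, g k t) = γ (m j t) := by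
      intro j hj
      induction j with
      | zero => simp [Circle.exp_arg]
      | succ i ih =>
        rw [Finset.sum_range_succ, ← add_assoc, Circle.exp_add, ih (by omega)]
        show γ (m i t) * Circle.exp (Complex.arg _) = _
        rw [Circle.exp_arg]
        exact mul_div_cancel _ _
    have hmN : m N t = t := by
      apply Subtype.ext
      simp only [hm]
      rw [div_self (ne_of_gt hNpos)]
      exact min_eq_left t.2.2
    have := key N le_rfl
    rwa [hmN] at this


lemma lift_unique {L L' : I → ℝ} (hL : Continuous L) (hL' : Continuous L')
    (h : ∀ t, Circle.exp (L t) = Circle.exp (L' t)) :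
    L 1 - L' 1 = L 0 - L' 0 := by
  have hint : ∀ t, ∃ m : ℤ, L t - L' t = m * (2 * π) := by
    intro t
    obtain ⟨m, hm⟩ := Circle.exp_eq_exp.mp (h t)
    exact ⟨m, by linarith⟩
  have hfc : Continuous (fun t => L t - L' t) := hL.sub hL'
  have hconn : IsPreconnected (Set.range fun t => L t - L' t) := isPreconnected_range hfc
  have key : ∀ u v : I, L u - L' u < L v - L' v → False := by
    intro u v huv
    obtain ⟨ma, hma⟩ := hint u
    obtain ⟨mb, hmb⟩ := hint v
    have hmalt : (ma : ℝ) < mb := by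
      have := Real.pi_pos
      nlinarith
    have hmale : (ma : ℝ) + 1 ≤ mb := by
      exact_mod_cast Int.add_one_le_iff.mpr (by exact_mod_cast hmalt)
    have hsub : Set.Icc (L u - L' u) (L v - L' v) ⊆ Set.range fun t => L t - L' t :=
      hconn.ordConnected.out ⟨u, rfl⟩ ⟨v, rfl⟩
    have hcm : (ma : ℝ) * (2 * π) + π ∈ Set.Icc (L u - L' u) (L v - L' v) := by
      constructor
      · rw [hma]; nlinarith [Real.pi_pos]
      · rw [hmb]; nlinarith [Real.pi_pos]
    obtain ⟨t, ht⟩ := hsub hcm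
    obtain ⟨k, hk⟩ := hint t
    simp only at ht
    rw [hk] at ht
    have h2k : (2 * k : ℝ) = 2 * ma + 1 := by
      have hpi := Real.pi_ne_zero
      have h2pi := Real.pi_pos
      push_cast
      nlinarith [ht]
    have : (2 * k : ℤ) = 2 * ma + 1 := by exact_mod_cast h2k
    omega
  rcases lt_trichotomy (L 0 - L' 0) (L 1 - L' 1) with hlt | heq | hgt
  · exact absurd (key 0 1 hlt) id
  · linarith
  · exact absurd (key 1 0 hgt) id

lemma winding_lift_eq {γ γ' : C(I, Circle)} (hγ : γ 0 = γ 1) (hγ' : γ' 0 = γ' 1)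
    (hclose : ∀ t, dist (γ' t) (γ t) < 2)
    {L L' : I → ℝ} (hLc : Continuous L) (hL : ∀ t, Circle.exp (L t) = γ t)
    (hL'c : Continuous L') (hL' : ∀ t, Circle.exp (L' t) = γ' t) :
    L 1 - L 0 = L' 1 - L' 0 := by
  set D : I → ℝ := fun t => Complex.arg ((γ' t / γ t : Circle) : ℂ) with hD
  have hDc : Continuous D := by
    rw [continuous_iff_continuousAt]; intro t
    have hin : Continuous fun t : I => ((γ' t / γ t : Circle) : ℂ) :=
      (γ'.continuous.div' γ.continuous).subtype_val
    have : ContinuousAt (Complex.arg ∘ fun t : I => ((γ' t / γ t : Circle) : ℂ)) t :=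
      ContinuousAt.comp (Complex.continuousAt_arg (dist_lt_two_slit (hclose t))) hin.continuousAt
    exact this
  have hLD : ∀ t, Circle.exp (L t + D t) = Circle.exp (L' t) := by
    intro t
    have h1 : Circle.exp (D t) = γ' t / γ t := Circle.exp_arg _
    rw [Circle.exp_add, hL t, h1, mul_div_cancel, hL' t]
  have h2 := lift_unique (hLc.add hDc) hL'c hLD
  have hD01 : D 0 = D 1 := by simp only [hD, hγ, hγ']
  simp only [Pi.add_apply] at h2
  linarith

lemma not_contractible_circle : ¬ Nonempty (ContinuousMap.HomotopyEquiv Circle PUnit) := by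
  rintro ⟨h⟩
  obtain ⟨H⟩ : (h.invFun.comp h.toFun).Homotopic (ContinuousMap.id Circle) := h.left_inv
  set c : Circle := h.invFun PUnit.unit with hc
  have hF : ∀ s : I, Continuous fun t : I => H (s, Circle.exp (2 * π * t)) := by
    intro s
    exact H.continuous.comp (continuous_const.prodMk
      (Circle.exp.continuous.comp (continuous_const.mul continuous_subtype_val)))
  set F : I → C(I, Circle) := fun s => ⟨fun t => H (s, Circle.exp (2 * π * t)), hF s⟩ with hFdef
  have hloop : ∀ s : I, F s 0 = F s 1 := by
    intro s
    show H (s, Circle.exp (2 * π * ((0:I):ℝ))) = H (s, Circle.exp (2 * π * ((1:I):ℝ)))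
    norm_num
  choose L hLc hLe using fun s => exists_lift (F s)
  set w : I → ℝ := fun s => L s 1 - L s 0 with hw
  have hH_uc : UniformContinuous (⇑H) := CompactSpace.uniformContinuous_of_continuous H.continuous
  obtain ⟨δ, hδ, hd⟩ := Metric.uniformContinuous_iff.mp hH_uc 2 (by norm_num)
  have hlc : IsLocallyConstant w := by
    rw [IsLocallyConstant.iff_eventually_eq]
    intro s
    rw [Metric.eventually_nhds_iff]
    refine ⟨δ, hδ, fun s' hs' => ?_⟩
    show L s' 1 - L s' 0 = L s 1 - L s 0
    apply winding_lift_eq (hloop s') (hloop s) ?_ (hLc s') (hLe s') (hLc s) (hLe s)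
    intro t
    apply hd
    rw [Prod.dist_eq]
    simp only [dist_self]
    rw [max_eq_left dist_nonneg, dist_comm]
    exact hs'
  have hw01 : w 0 = w 1 := hlc.apply_eq_of_preconnectedSpace 0 1
  -- w 1 = 2π
  have hF1 : ∀ t : I, F 1 t = Circle.exp (2 * π * t) := by
    intro t
    show H (1, _) = _
    rw [H.apply_one]
    rfl
  have hw1 : w 1 = 2 * π := by
    have hexp : ∀ t : I, Circle.exp ((fun t : I => 2 * π * (t:ℝ)) t) = Circle.exp (L 1 t) := by
      intro t; rw [hLe 1 t, hF1 t]
    have := lift_unique (continuous_const.mul continuous_subtype_val) (hLc 1) hexp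
    simp only [Pi.mul_apply, Set.Icc.coe_one, Set.Icc.coe_zero, mul_one, mul_zero] at this
    show L 1 1 - L 1 0 = 2 * π
    linarith
  -- w 0 = 0
  have hF0 : ∀ t : I, F 0 t = c := by
    intro t
    show H (0, _) = _
    rw [H.apply_zero]
    show h.invFun (h.toFun _) = c
    rw [hc]
  have hw0 : w 0 = 0 := by
    have hexp : ∀ t : I, Circle.exp ((fun _ : I => Complex.arg (c:ℂ)) t) = Circle.exp (L 0 t) := by
      intro t; rw [hLe 0 t, hF0 t]; exact Circle.exp_arg c
    have := lift_unique continuous_const (hLc 0) hexp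
    show L 0 1 - L 0 0 = 0
    linarith
  rw [hw0, hw1] at hw01
  exact Real.pi_ne_zero (by linarith)


end Stmt7Aux

namespace Stmt7Aux3
open Real

abbrev TheDMC := DMC (fun _ : Fin 2 => PUnit.unit) (fun _ : Fin 2 => PUnit.unit)


/-- sign of the two strands -/
def sgn : Fin 2 → ℝ := fun a => if a = 0 then 1 else -1

noncomputable def phi : (PUnit ⊕ Fin 2 × I) ⊕ PUnit → Circle :=
  Sum.elim (Sum.elim (fun _ => 1) (fun p => Circle.exp (sgn p.1 * π * p.2))) (fun _ => Circle.exp π)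

lemma phi_continuous : Continuous phi := by
  apply Continuous.sumElim
  · apply Continuous.sumElim
    · exact continuous_const
    · exact Circle.exp.continuous.comp
        ((((continuous_of_discreteTopology (f := sgn)).comp continuous_fst).mul
          continuous_const).mul (continuous_subtype_val.comp continuous_snd))
  · exact continuous_const

lemma phi_compat : ∀ p q, (fun p q : (PUnit ⊕ Fin 2 × I) ⊕ PUnit =>
    (∃ a : Fin 2, p = Sum.inl (Sum.inr (a, 0)) ∧ q = Sum.inl (Sum.inl PUnit.unit)) ∨
    (∃ a : Fin 2, p = Sum.inl (Sum.inr (a, 1)) ∧ q = Sum.inr PUnit.unit)) p q →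
    phi p = phi q := by
  rintro p q (⟨a, rfl, rfl⟩ | ⟨a, rfl, rfl⟩)
  · show Circle.exp (sgn a * π * ((0 : I) : ℝ)) = 1
    norm_num
  · show Circle.exp (sgn a * π * ((1 : I) : ℝ)) = Circle.exp π
    fin_cases a <;> simp [sgn]
    rw [← Circle.exp_neg, show -π = π - 2 * π by ring, Circle.exp_sub_two_pi]

noncomputable def psi (z : Circle) : TheDMC :=
  if h : 0 ≤ Complex.arg (z : ℂ) then
    Quot.mk _ (Sum.inl (Sum.inr (0, ⟨Complex.arg (z:ℂ) / π,
      div_nonneg h pi_pos.le,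
      (div_le_one pi_pos).mpr (Complex.arg_le_pi _)⟩)))
  else
    Quot.mk _ (Sum.inl (Sum.inr (1, ⟨-Complex.arg (z:ℂ) / π,
      div_nonneg (by linarith [not_le.mp h]) pi_pos.le,
      (div_le_one pi_pos).mpr (by linarith [Complex.neg_pi_lt_arg (z:ℂ)])⟩)))

end Stmt7Aux3

namespace Stmt7Aux3
open Real

noncomputable def desc : TheDMC → Circle := Quot.lift phi phi_compat

lemma quot_zero (a : Fin 2) :
    (Quot.mk _ (Sum.inl (Sum.inr (a, 0))) : TheDMC) = Quot.mk _ (Sum.inl (Sum.inl PUnit.unit)) :=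
  Quot.sound (Or.inl ⟨a, rfl, rfl⟩)

lemma quot_one (a : Fin 2) :
    (Quot.mk _ (Sum.inl (Sum.inr (a, 1))) : TheDMC) = Quot.mk _ (Sum.inr PUnit.unit) :=
  Quot.sound (Or.inr ⟨a, rfl, rfl⟩)

lemma mk_coord (a : Fin 2) (s t : I) (h : (s : ℝ) = (t : ℝ)) :
    (Quot.mk _ (Sum.inl (Sum.inr (a, s))) : TheDMC) = Quot.mk _ (Sum.inl (Sum.inr (a, t))) := by
  rw [Subtype.ext h]

lemma desc_psi (z : Circle) : desc (psi z) = z := by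
  rw [psi]
  by_cases h : 0 ≤ Complex.arg (z:ℂ) <;> [erw [dif_pos h]; erw [dif_neg h]]
  · show Circle.exp (sgn 0 * π * (Complex.arg (z:ℂ) / π)) = z
    have : sgn 0 * π * (Complex.arg (z:ℂ) / π) = Complex.arg (z:ℂ) := by
      simp only [sgn, if_pos rfl, ↓reduceIte]
      field_simp
    rw [this, Circle.exp_arg]
  · show Circle.exp (sgn 1 * π * (-Complex.arg (z:ℂ) / π)) = z
    have : sgn 1 * π * (-Complex.arg (z:ℂ) / π) = Complex.arg (z:ℂ) := by
      simp only [sgn, if_neg (by decide : ¬ (1 : Fin 2) = 0), ↓reduceIte]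
      field_simp
    rw [this, Circle.exp_arg]

lemma psi_desc (p : (PUnit ⊕ Fin 2 × I) ⊕ PUnit) :
    psi (desc (Quot.mk _ p)) = Quot.mk _ p := by
  have hdesc : ∀ q, desc (Quot.mk _ q) = phi q := fun _ => rfl
  rcases p with (u | ⟨a, t⟩) | u
  · cases u
    rw [hdesc]
    have h1 : Complex.arg ((phi (Sum.inl (Sum.inl PUnit.unit)) : Circle) : ℂ) = 0 := by
      show Complex.arg ((1 : Circle) : ℂ) = 0
      norm_num
    erw [psi, dif_pos (le_of_eq h1.symm)]
    refine Eq.trans (mk_coord 0 _ 0 ?_) (quot_zero 0)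
    simp [h1]
  · rcases (by omega : (a : ℕ) = 0 ∨ (a : ℕ) = 1) with ha | ha <;>
      [(have ha' : a = 0 := Fin.ext ha); (have ha' : a = 1 := Fin.ext ha)] <;> subst ha'
    · -- a = 0 : phi = exp (π t)
      rw [hdesc]
      have h1 : Complex.arg ((phi (Sum.inl (Sum.inr (0, t))) : Circle) : ℂ) = π * t := by
        show Complex.arg ((Circle.exp (sgn 0 * π * t) : Circle) : ℂ) = π * t
        have hs : sgn 0 * π * (t:ℝ) = π * t := by simp [sgn]
        rw [hs]
        exact Circle.arg_exp (by nlinarith [pi_pos, t.2.1, t.2.2]) (by nlinarith [pi_pos, t.2.2])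
      erw [psi, dif_pos (by rw [h1]; nlinarith [pi_pos, t.2.1])]
      refine mk_coord 0 _ t ?_
      show Complex.arg ((phi (Sum.inl (Sum.inr (0, t))) : Circle) : ℂ) / π = (t : ℝ)
      rw [h1]
      field_simp
      try ring
    · -- a = 1 : phi = exp (-(π t))
      rw [hdesc]
      have hphi : phi (Sum.inl (Sum.inr (1, t))) = Circle.exp (-(π * t)) := by
        show Circle.exp (sgn 1 * π * t) = _
        congr 1
        simp [sgn]
        try ring
      rcases eq_or_lt_of_le t.2.2 with ht1 | ht1
      · -- t = 1
        have h1 : Complex.arg ((phi (Sum.inl (Sum.inr (1, t))) : Circle) : ℂ) = π := by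
          rw [hphi, ht1]
          rw [show -(π * 1) = π - 2 * π by ring, Circle.exp_sub_two_pi]
          exact Circle.arg_exp (by linarith [pi_pos]) le_rfl
        erw [psi, dif_pos (by rw [h1]; exact pi_pos.le)]
        refine Eq.trans (mk_coord 0 _ 1 ?_) ?_
        · show Complex.arg ((phi (Sum.inl (Sum.inr (1, t))) : Circle) : ℂ) / π = ((1:I) : ℝ)
          rw [h1]
          try simp [div_self Real.pi_ne_zero]
        · refine (quot_one 0).trans ((quot_one 1).symm.trans (mk_coord 1 1 t ht1.symm))
      · rcases eq_or_lt_of_le t.2.1 with ht0 | ht0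
        · -- t = 0
          have h1 : Complex.arg ((phi (Sum.inl (Sum.inr (1, t))) : Circle) : ℂ) = 0 := by
            rw [hphi, ← ht0]
            norm_num
          erw [psi, dif_pos (le_of_eq h1.symm)]
          refine Eq.trans (mk_coord 0 _ 0 ?_) ?_
          · show Complex.arg ((phi (Sum.inl (Sum.inr (1, t))) : Circle) : ℂ) / π = ((0:I) : ℝ)
            rw [h1]
            simp
          · refine (quot_zero 0).trans ((quot_zero 1).symm.trans (mk_coord 1 0 t ht0))
        · -- 0 < t < 1
          have h1 : Complex.arg ((phi (Sum.inl (Sum.inr (1, t))) : Circle) : ℂ) = -(π * t) := by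
            rw [hphi]
            exact Circle.arg_exp (by nlinarith [pi_pos]) (by nlinarith [pi_pos])
          erw [psi, dif_neg (by rw [h1]; nlinarith [pi_pos])]
          refine mk_coord 1 _ t ?_
          show -Complex.arg ((phi (Sum.inl (Sum.inr (1, t))) : Circle) : ℂ) / π = (t : ℝ)
          rw [h1]
          field_simp
          try ring
  · cases u
    rw [hdesc]
    have h1 : Complex.arg ((phi (Sum.inr PUnit.unit) : Circle) : ℂ) = π := by
      show Complex.arg ((Circle.exp π : Circle) : ℂ) = π
      exact Circle.arg_exp (by linarith [pi_pos]) le_rfl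
    erw [psi, dif_pos (by rw [h1]; exact pi_pos.le)]
    refine Eq.trans (mk_coord 0 _ 1 ?_) (quot_one 0)
    show Complex.arg ((phi (Sum.inr PUnit.unit) : Circle) : ℂ) / π = ((1:I) : ℝ)
    rw [h1]
    try simp [div_self Real.pi_ne_zero]

noncomputable def dmcEquiv : TheDMC ≃ Circle where
  toFun := desc
  invFun := psi
  left_inv := by
    intro x
    induction x using Quot.ind with
    | _ p => exact psi_desc p
  right_inv := desc_psi

instance : CompactSpace TheDMC := Quot.compactSpace

noncomputable def dmcHomeo : TheDMC ≃ₜ Circle :=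
  Continuous.homeoOfEquivCompactToT2 (f := dmcEquiv)
    (show Continuous desc from continuous_quot_lift phi_compat phi_continuous)

end Stmt7Aux3

/-- The composite, in the homotopy-cospan category, of the comultiplication cospan
`{*} → {*} ← {a,b}` with the multiplication cospan `{a,b} → {*} ← {*}` is computed by the
homotopy pushout of `pt ← {a,b} → pt`; its apex is homotopy equivalent to a circle, and in
particular not homotopy equivalent to the apex `{*}` of the identity cospan. -/
theorem stmt7 :
    Nonempty
      (ContinuousMap.HomotopyEquiv
        (DMC (fun _ : Fin 2 => PUnit.unit) (fun _ : Fin 2 => PUnit.unit)) Circle) ∧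
    ¬ Nonempty
      (ContinuousMap.HomotopyEquiv
        (DMC (fun _ : Fin 2 => PUnit.unit) (fun _ : Fin 2 => PUnit.unit)) PUnit) := by
  constructor
  · exact ⟨Stmt7Aux3.dmcHomeo.toHomotopyEquiv⟩
  · rintro ⟨h⟩
    exact Stmt7Aux.not_contractible_circle ⟨Stmt7Aux3.dmcHomeo.toHomotopyEquiv.symm.trans h⟩
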